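/- Let F₁(y) = (1 + |y|/2) y/|y| for 0 < |y| < 2, the map blowing up the origin to the unit ball while fixing the sphere |y| = 2. Then F₁ is a bijection from {0 < |y| < 2} onto the annulus {1 < |x| < 2}, and for every x with 1 < |x| < 2, the push-forward of the identity medium satisfies ((F₁)_*I)(x) = [DF₁ (DF₁)ᵀ / det DF₁]|_{y=F₁⁻¹(x)} = (2(|x| − 1)²/|x|²) x̂x̂ᵀ + 2(I − x̂x̂ᵀ), where x̂ = x/|x|. In particular the radial eigenvalue 2(|x| − 1)²/|x|² of the cloaking medium tends to 0 as |x| → 1⁺, so the ideal cloaking medium is singular at the cloaking interface |x| = 1. -/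

import Mathlib

/-- The Euclidean norm on `Fin 3 → ℝ`. -/
noncomputable def enorm3 (x : Fin 3 → ℝ) : ℝ := Real.sqrt (x 0 ^ 2 + x 1 ^ 2 + x 2 ^ 2)

/-- The Jacobian matrix of a map `F : ℝ³ → ℝ³` at a point `y`. -/
noncomputable def jac (F : (Fin 3 → ℝ) → (Fin 3 → ℝ)) (y : Fin 3 → ℝ) :
    Matrix (Fin 3) (Fin 3) ℝ :=
  Matrix.of fun i j => fderiv ℝ F y (Pi.single j 1) i

/-- The singular ideal-cloak transformation `F₁(y) = (1 + |y|/2) y/|y|`. -/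
noncomputable def F1 (y : Fin 3 → ℝ) : Fin 3 → ℝ :=
  ((1 + enorm3 y / 2) / enorm3 y) • y

set_option linter.unreachableTactic false
set_option linter.unusedTactic false

noncomputable def dotCLM (y : Fin 3 → ℝ) : (Fin 3 → ℝ) →L[ℝ] ℝ :=
  y 0 • ContinuousLinearMap.proj 0 + y 1 • ContinuousLinearMap.proj 1 +
    y 2 • ContinuousLinearMap.proj 2

lemma dotCLM_apply (y v : Fin 3 → ℝ) : dotCLM y v = y 0 * v 0 + y 1 * v 1 + y 2 * v 2 := by
  simp [dotCLM, ContinuousLinearMap.proj]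

lemma hasFDerivAt_enorm3 (y : Fin 3 → ℝ) (h : enorm3 y ≠ 0) :
    HasFDerivAt enorm3 ((enorm3 y)⁻¹ • dotCLM y) y := by
  have h0 : HasFDerivAt (fun y : Fin 3 → ℝ => y 0)
      (ContinuousLinearMap.proj 0 : (Fin 3 → ℝ) →L[ℝ] ℝ) y := hasFDerivAt_apply 0 y
  have h1 : HasFDerivAt (fun y : Fin 3 → ℝ => y 1)
      (ContinuousLinearMap.proj 1 : (Fin 3 → ℝ) →L[ℝ] ℝ) y := hasFDerivAt_apply 1 y
  have h2 : HasFDerivAt (fun y : Fin 3 → ℝ => y 2)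
      (ContinuousLinearMap.proj 2 : (Fin 3 → ℝ) →L[ℝ] ℝ) y := hasFDerivAt_apply 2 y
  have hQ : HasFDerivAt (fun y : Fin 3 → ℝ => y 0 ^ 2 + y 1 ^ 2 + y 2 ^ 2)
      ((2:ℝ) • dotCLM y) y := by
    have := ((h0.mul h0).add (h1.mul h1)).add (h2.mul h2)
    simp only [← pow_two] at this
    refine this.congr_fderiv ?_
    ext v
    simp [dotCLM]
    ring
  have hQ0 : y 0 ^ 2 + y 1 ^ 2 + y 2 ^ 2 ≠ 0 := by
    intro hc; apply h; simp [enorm3, hc]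
  have := (Real.hasDerivAt_sqrt hQ0).comp_hasFDerivAt y hQ
  refine this.congr_fderiv ?_
  ext v
  have hs : Real.sqrt (y 0 ^ 2 + y 1 ^ 2 + y 2 ^ 2) = enorm3 y := rfl
  simp [hs, smul_smul]

noncomputable def F1deriv (y : Fin 3 → ℝ) : (Fin 3 → ℝ) →L[ℝ] (Fin 3 → ℝ) :=
  ((2:ℝ)⁻¹ + (enorm3 y)⁻¹) • ContinuousLinearMap.id ℝ (Fin 3 → ℝ)
    - ((enorm3 y) ^ 3)⁻¹ • (dotCLM y).smulRight y

lemma continuous_enorm3 : Continuous enorm3 := by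
  unfold enorm3; fun_prop

lemma hasFDerivAt_F1 (y : Fin 3 → ℝ) (h : 0 < enorm3 y) :
    HasFDerivAt F1 (F1deriv y) y := by
  have h' : enorm3 y ≠ 0 := ne_of_gt h
  have hr := hasFDerivAt_enorm3 y h'
  have hinv := (hasDerivAt_inv h').comp_hasFDerivAt y hr
  have hid : HasFDerivAt (fun y : Fin 3 → ℝ => y)
      (ContinuousLinearMap.id ℝ (Fin 3 → ℝ)) y := hasFDerivAt_id y
  have hg : HasFDerivAt (fun y : Fin 3 → ℝ => (2:ℝ)⁻¹ • y + (enorm3 y)⁻¹ • y)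
      (F1deriv y) y := by
    have h2 : HasFDerivAt (fun y : Fin 3 → ℝ => (2:ℝ)⁻¹ • y)
        ((2:ℝ)⁻¹ • ContinuousLinearMap.id ℝ (Fin 3 → ℝ)) y := hid.const_smul (2:ℝ)⁻¹
    have h3 := hinv.smul hid
    have := h2.add h3
    refine this.congr_fderiv ?_
    ext v i
    simp [F1deriv, dotCLM_apply, smul_smul]
    field_simp
    ring
  apply hg.congr_of_eventuallyEq
  have hopen : IsOpen {z : Fin 3 → ℝ | enorm3 z ≠ 0} :=
    isOpen_ne.preimage continuous_enorm3
  filter_upwards [hopen.mem_nhds h'] with z hz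
  unfold F1
  rw [← add_smul]
  congr 1
  field_simp
  ring

lemma jac_F1 (y : Fin 3 → ℝ) (h : 0 < enorm3 y) :
    jac F1 y = ((2:ℝ)⁻¹ + (enorm3 y)⁻¹) • (1 : Matrix (Fin 3) (Fin 3) ℝ)
      - ((enorm3 y) ^ 3)⁻¹ • Matrix.vecMulVec y y := by
  have hd := (hasFDerivAt_F1 y h).fderiv
  ext i j
  simp only [jac, Matrix.of_apply, hd, F1deriv, ContinuousLinearMap.sub_apply,
    ContinuousLinearMap.smul_apply, ContinuousLinearMap.id_apply,
    ContinuousLinearMap.smulRight_apply, dotCLM_apply, Pi.sub_apply, Pi.smul_apply,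
    Matrix.sub_apply, Matrix.smul_apply, Matrix.one_apply, Matrix.vecMulVec_apply,
    smul_eq_mul]
  fin_cases i <;> fin_cases j <;> simp [Pi.single_apply] <;> first | tauto | (left; ring) | ring1

lemma enorm3_nonneg (y : Fin 3 → ℝ) : 0 ≤ enorm3 y := Real.sqrt_nonneg _

lemma enorm3_sq (y : Fin 3 → ℝ) : enorm3 y ^ 2 = y 0 ^ 2 + y 1 ^ 2 + y 2 ^ 2 :=
  Real.sq_sqrt (by positivity)

lemma enorm3_smul (c : ℝ) (y : Fin 3 → ℝ) : enorm3 (c • y) = |c| * enorm3 y := by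
  unfold enorm3
  rw [show ((c • y) 0 ^ 2 + (c • y) 1 ^ 2 + (c • y) 2 ^ 2)
      = c ^ 2 * (y 0 ^ 2 + y 1 ^ 2 + y 2 ^ 2) by simp [Pi.smul_apply]; ring,
    Real.sqrt_mul (sq_nonneg c), Real.sqrt_sq_eq_abs]

lemma norm_F1 (y : Fin 3 → ℝ) (h : 0 < enorm3 y) : enorm3 (F1 y) = 1 + enorm3 y / 2 := by
  unfold F1
  rw [enorm3_smul, abs_of_pos (by positivity)]
  field_simp

lemma hat_F1 (y : Fin 3 → ℝ) (h : 0 < enorm3 y) :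
    (enorm3 (F1 y))⁻¹ • F1 y = (enorm3 y)⁻¹ • y := by
  rw [norm_F1 y h]
  unfold F1
  rw [smul_smul]
  congr 1
  have h1 : (1 : ℝ) + enorm3 y / 2 ≠ 0 := by positivity
  field_simp

lemma det_aux (a c : ℝ) (v : Fin 3 → ℝ) (hv : v 0 ^ 2 + v 1 ^ 2 + v 2 ^ 2 = 1) :
    (a • (1 : Matrix (Fin 3) (Fin 3) ℝ) - c • Matrix.vecMulVec v v).det
      = a ^ 2 * (a - c) := by
  simp [Matrix.det_fin_three, Matrix.vecMulVec_apply, Matrix.one_apply]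
  linear_combination (-(a ^ 2 * c)) * hv

lemma vecMulVec_self_transpose (v : Fin 3 → ℝ) :
    (Matrix.vecMulVec v v).transpose = Matrix.vecMulVec v v := by
  ext i j; simp [Matrix.vecMulVec_apply, mul_comm]

lemma vecMulVec_self_mul (v : Fin 3 → ℝ) (hv : v 0 ^ 2 + v 1 ^ 2 + v 2 ^ 2 = 1) :
    Matrix.vecMulVec v v * Matrix.vecMulVec v v = Matrix.vecMulVec v v := by
  ext i j
  simp [Matrix.mul_apply, Fin.sum_univ_three, Matrix.vecMulVec_apply]
  linear_combination (v i * v j) * hv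

lemma mulT_aux (a c : ℝ) (v : Fin 3 → ℝ) (hv : v 0 ^ 2 + v 1 ^ 2 + v 2 ^ 2 = 1) :
    (a • (1 : Matrix (Fin 3) (Fin 3) ℝ) - c • Matrix.vecMulVec v v) *
      (a • (1 : Matrix (Fin 3) (Fin 3) ℝ) - c • Matrix.vecMulVec v v).transpose
      = (a ^ 2) • (1 : Matrix (Fin 3) (Fin 3) ℝ)
        + (c ^ 2 - 2 * a * c) • Matrix.vecMulVec v v := by
  simp only [Matrix.transpose_sub, Matrix.transpose_smul, Matrix.transpose_one,
    vecMulVec_self_transpose, sub_mul, mul_sub, Matrix.smul_mul, Matrix.mul_smul,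
    one_mul, mul_one, vecMulVec_self_mul v hv, smul_smul]
  module

lemma part2 (y : Fin 3 → ℝ) (h0 : 0 < enorm3 y) (h2' : enorm3 y < 2) :
    ((jac F1 y).det)⁻¹ • (jac F1 y * (jac F1 y).transpose) =
      (2 * (enorm3 (F1 y) - 1) ^ 2 / (enorm3 (F1 y)) ^ 2) •
        Matrix.vecMulVec ((enorm3 (F1 y))⁻¹ • F1 y) ((enorm3 (F1 y))⁻¹ • F1 y) +
      (2 : ℝ) • (1 - Matrix.vecMulVec ((enorm3 (F1 y))⁻¹ • F1 y)
        ((enorm3 (F1 y))⁻¹ • F1 y)) := by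
  set r := enorm3 y with hrdef
  have hr : r ≠ 0 := ne_of_gt h0
  set v : Fin 3 → ℝ := r⁻¹ • y with hv
  have hvunit : v 0 ^ 2 + v 1 ^ 2 + v 2 ^ 2 = 1 := by
    have hsq := enorm3_sq y
    simp only [hv, Pi.smul_apply, smul_eq_mul]
    field_simp
    linarith [enorm3_sq y]
  have hyy : Matrix.vecMulVec y y = (r ^ 2) • Matrix.vecMulVec v v := by
    ext i j
    simp only [Matrix.vecMulVec_apply, hv, Matrix.smul_apply, Pi.smul_apply, smul_eq_mul]
    field_simp
  have hjac : jac F1 y = ((2:ℝ)⁻¹ + r⁻¹) • (1 : Matrix (Fin 3) (Fin 3) ℝ)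
      - r⁻¹ • Matrix.vecMulVec v v := by
    rw [jac_F1 y h0, hyy, smul_smul]
    congr 2
    rw [← hrdef]
    field_simp
  set a : ℝ := (2:ℝ)⁻¹ + r⁻¹ with hadef
  have ha : 0 < a := add_pos (by norm_num) (inv_pos.2 h0)
  have h1r : (1 : ℝ) + r / 2 ≠ 0 := by positivity
  rw [hjac, det_aux a r⁻¹ v hvunit, mulT_aux a r⁻¹ v hvunit, hat_F1 y h0, ← hv,
    norm_F1 y h0, ← hrdef]
  have ha0 : a ≠ 0 := ne_of_gt ha
  have hsub : a - r⁻¹ = 2⁻¹ := by rw [hadef]; ring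
  have hri : r⁻¹ = a - 2⁻¹ := by rw [hadef]; ring
  have e1 : (a ^ 2 * (a - r⁻¹))⁻¹ * a ^ 2 = 2 := by
    rw [hsub]
    field_simp
  have hk : 2 * ((1 + r / 2) - 1) ^ 2 / (1 + r / 2) ^ 2 = (2 * a ^ 2)⁻¹ := by
    rw [hadef]
    field_simp
    ring
  have e2 : (a ^ 2 * (a - r⁻¹))⁻¹ * ((r⁻¹) ^ 2 - 2 * a * r⁻¹) = (2 * a ^ 2)⁻¹ - 2 := by
    rw [hsub, hri]
    field_simp
    ring
  rw [hk, smul_add, smul_smul, smul_smul, e1, e2]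
  module

lemma part1 : Set.BijOn F1 {y : Fin 3 → ℝ | 0 < enorm3 y ∧ enorm3 y < 2}
    {x : Fin 3 → ℝ | 1 < enorm3 x ∧ enorm3 x < 2} := by
  refine ⟨?_, ?_, ?_⟩
  · rintro y ⟨h0, h2⟩
    rw [Set.mem_setOf_eq, norm_F1 y h0]
    constructor <;> linarith
  · rintro y ⟨hy0, hy2⟩ z ⟨hz0, hz2⟩ hf
    have hn : enorm3 (F1 y) = enorm3 (F1 z) := by rw [hf]
    rw [norm_F1 y hy0, norm_F1 z hz0] at hn
    have hre : enorm3 y = enorm3 z := by linarith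
    unfold F1 at hf
    rw [← hre] at hf
    have hc : ((1 + enorm3 y / 2) / enorm3 y) ≠ 0 := by positivity
    exact smul_right_injective (Fin 3 → ℝ) hc hf
  · rintro x ⟨hx1, hx2⟩
    set n := enorm3 x with hn
    have hn0 : (0:ℝ) < n := lt_trans one_pos hx1
    refine ⟨(2 * (n - 1) / n) • x, ?_, ?_⟩
    · have : enorm3 ((2 * (n - 1) / n) • x) = 2 * (n - 1) := by
        rw [enorm3_smul, abs_of_pos (div_pos (by linarith) hn0), ← hn]
        field_simp
      rw [Set.mem_setOf_eq, this]
      constructor <;> linarith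
    · have hne : enorm3 ((2 * (n - 1) / n) • x) = 2 * (n - 1) := by
        rw [enorm3_smul, abs_of_pos (div_pos (by linarith) hn0), ← hn]
        field_simp
      unfold F1
      rw [hne, smul_smul]
      have h1 : n - 1 ≠ 0 := ne_of_gt (by linarith)
      have : (1 + 2 * (n - 1) / 2) / (2 * (n - 1)) * (2 * (n - 1) / n) = 1 := by
        field_simp
        ring
      rw [this, one_smul]

lemma part3 : Filter.Tendsto (fun r : ℝ => 2 * (r - 1) ^ 2 / r ^ 2)
    (nhdsWithin 1 (Set.Ioi 1)) (nhds 0) := by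
  have hc : ContinuousAt (fun r : ℝ => 2 * (r - 1) ^ 2 / r ^ 2) 1 :=
    ContinuousAt.div (by fun_prop) (by fun_prop) (by norm_num)
  have := hc.tendsto.mono_left (nhdsWithin_le_nhds (s := Set.Ioi 1))
  simpa using this

/-- `F₁(y) = (1 + |y|/2)y/|y|` is a bijection of `{0 < |y| < 2}` onto
the annulus `{1 < |x| < 2}`, and the push-forward of the identity medium satisfies
`((F₁)_*I)(x) = (2(|x|−1)²/|x|²) x̂x̂ᵀ + 2(I − x̂x̂ᵀ)`; in particular the radial
eigenvalue `2(|x|−1)²/|x|²` tends to `0` as `|x| → 1⁺`, so the ideal cloaking medium is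
singular at the cloaking interface. -/
theorem ideal_cloak_medium :
    Set.BijOn F1 {y : Fin 3 → ℝ | 0 < enorm3 y ∧ enorm3 y < 2}
      {x : Fin 3 → ℝ | 1 < enorm3 x ∧ enorm3 x < 2} ∧
    (∀ y : Fin 3 → ℝ, 0 < enorm3 y → enorm3 y < 2 →
      ((jac F1 y).det)⁻¹ • (jac F1 y * (jac F1 y).transpose) =
        (2 * (enorm3 (F1 y) - 1) ^ 2 / (enorm3 (F1 y)) ^ 2) •
          Matrix.vecMulVec ((enorm3 (F1 y))⁻¹ • F1 y) ((enorm3 (F1 y))⁻¹ • F1 y) +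
        (2 : ℝ) • (1 - Matrix.vecMulVec ((enorm3 (F1 y))⁻¹ • F1 y)
          ((enorm3 (F1 y))⁻¹ • F1 y))) ∧
    Filter.Tendsto (fun r : ℝ => 2 * (r - 1) ^ 2 / r ^ 2)
      (nhdsWithin 1 (Set.Ioi 1)) (nhds 0) := by
  exact ⟨part1, fun y h0 h2 => part2 y h0 h2, part3⟩
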